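/- Let (X,ρ) be a metric space, s̃ ∈ (0,1), and b, b̃ positive integers. Let L₁ ⊆ L₂ ⊆ ⋯ ⊆ L_b be finite subsets of X such that any two distinct points of L_b have distance at least 3s̃. Let L̃₁, …, L̃_{b̃} be pairwise disjoint subsets of X with ⋃_{n=1}^{b̃} L̃_n = L_b. Let K₁, …, K_{b̃} be finite subsets of X with Hausdorff distance d(K_n, L̃_n) ≤ s̃ for each n = 1, …, b̃. Then every point x ∈ ⋃_{j=1}^{b̃} K_j has a unique point p(x) ∈ L_b with ρ(x, p(x)) ≤ s̃ (its parent), and if for n = 1, …, b one defines K̃_n = { x ∈ ⋃_{j=1}^{b̃} K_j : p(x) ∈ L_n }, then the Hausdorff distance satisfies d(K̃_n, L_n) ≤ s̃ for every n = 1, …, b. -/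
import Mathlib


open Metric

open scoped Classical in
/-- The Hausdorff distance between subsets of a metric space, with the convention that
`hDist A ∅ = hDist ∅ A = 1` whenever `A` is nonempty. -/
noncomputable def hDist {X : Type*} [MetricSpace X] (A B : Set X) : ℝ :=
  if A.Nonempty ↔ B.Nonempty then Metric.hausdorffDist A B else 1


lemma hDist_comm' {X : Type*} [MetricSpace X] (A B : Set X) : hDist A B = hDist B A := by
  unfold hDist
  by_cases h : A.Nonempty ↔ B.Nonempty
  · rw [if_pos h, if_pos h.symm, Metric.hausdorffDist_comm]
  · rw [if_neg h, if_neg (fun hh => h hh.symm)]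

lemma close_point {X : Type*} [MetricSpace X] {A B : Set X} {r : ℝ} (hr : r < 1)
    (hAf : A.Finite) (hBf : B.Finite) (h : hDist A B ≤ r) {x : X} (hx : x ∈ A) :
    ∃ y ∈ B, dist x y ≤ r := by
  unfold hDist at h
  split_ifs at h with hiff
  · have hA : A.Nonempty := ⟨x, hx⟩
    have hB : B.Nonempty := hiff.mp hA
    have hne := Metric.hausdorffEdist_ne_top_of_nonempty_of_bounded hA hB hAf.isBounded hBf.isBounded
    have h1 : Metric.infDist x B ≤ r :=
      le_trans (Metric.infDist_le_hausdorffDist_of_mem hx hne) h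
    obtain ⟨y, hy, hyd⟩ := hBf.isCompact.exists_infDist_eq_dist hB x
    exact ⟨y, hy, by rw [← hyd]; exact h1⟩
  · linarith

/-- Let `(X,ρ)` be a metric space, `s' ∈ (0,1)` (written `s̃` in the
paper), and `b, b'` positive integers. Let `L₁ ⊆ ⋯ ⊆ L_b` be finite subsets of `X` such
that any two distinct points of `L_b` have distance at least `3s'`. Let `L'₁, …, L'_{b'}`
(written `L̃ₙ`) be pairwise disjoint subsets of `X` with `⋃ₙ L'ₙ = L_b`, and
`K₁, …, K_{b'}` finite subsets with Hausdorff distance `d(Kₙ, L'ₙ) ≤ s'`. Then every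
`x ∈ ⋃ⱼ Kⱼ` has a unique parent `p(x) ∈ L_b` with `ρ(x, p(x)) ≤ s'`, and defining
`K'ₙ = {x ∈ ⋃ⱼ Kⱼ : p(x) ∈ Lₙ}` one has `d(K'ₙ, Lₙ) ≤ s'` for `n = 1, …, b`. -/
theorem stmt_6 {X : Type*} [MetricSpace X] (s' : ℝ) (hs : s' ∈ Set.Ioo (0:ℝ) 1)
    (b b' : ℕ) (hb : 0 < b) (hb' : 0 < b')
    (L : ℕ → Set X)
    (hLfin : ∀ n, 1 ≤ n → n ≤ b → (L n).Finite)
    (hLmono : ∀ m n, 1 ≤ m → m ≤ n → n ≤ b → L m ⊆ L n)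
    (hLsep : ∀ x ∈ L b, ∀ y ∈ L b, x ≠ y → 3 * s' ≤ dist x y)
    (L' : ℕ → Set X)
    (hdisj : ∀ m n, 1 ≤ m → m < n → n ≤ b' → Disjoint (L' m) (L' n))
    (hcover : (⋃ n ∈ Set.Icc 1 b', L' n) = L b)
    (K : ℕ → Set X)
    (hKfin : ∀ n, 1 ≤ n → n ≤ b' → (K n).Finite)
    (hdK : ∀ n, 1 ≤ n → n ≤ b' → hDist (K n) (L' n) ≤ s') :
    (∀ x ∈ ⋃ j ∈ Set.Icc 1 b', K j, ∃! y, y ∈ L b ∧ dist x y ≤ s') ∧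
    ∀ p : X → X, (∀ x ∈ ⋃ j ∈ Set.Icc 1 b', K j, p x ∈ L b ∧ dist x (p x) ≤ s') →
      ∀ n, 1 ≤ n → n ≤ b →
        hDist {x ∈ ⋃ j ∈ Set.Icc 1 b', K j | p x ∈ L n} (L n) ≤ s' := by

  obtain ⟨hs0, hs1⟩ := hs
  have hLb : (L b).Finite := hLfin b hb le_rfl
  have hL'sub : ∀ m, 1 ≤ m → m ≤ b' → L' m ⊆ L b := by
    intro m h1 h2 y hy
    rw [← hcover]
    exact Set.mem_biUnion (Set.mem_Icc.mpr ⟨h1, h2⟩) hy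
  -- uniqueness of close points in L b
  have huniq : ∀ x : X, ∀ y ∈ L b, ∀ z ∈ L b, dist x y ≤ s' → dist x z ≤ s' → y = z := by
    intro x y hy z hz hxy hxz
    by_contra hne
    have := hLsep y hy z hz hne
    have htri := dist_triangle y x z
    rw [dist_comm y x] at htri
    linarith
  -- existence of close points
  have hexists : ∀ x ∈ ⋃ j ∈ Set.Icc 1 b', K j, ∃ y ∈ L b, dist x y ≤ s' := by
    intro x hx
    simp only [Set.mem_iUnion, Set.mem_Icc] at hx
    obtain ⟨j, ⟨h1, h2⟩, hxK⟩ := hx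
    obtain ⟨y, hy, hxy⟩ := close_point hs1 (hKfin j h1 h2)
      (hLb.subset (hL'sub j h1 h2)) (hdK j h1 h2) hxK
    exact ⟨y, hL'sub j h1 h2 hy, hxy⟩
  constructor
  · intro x hx
    obtain ⟨y, hy, hxy⟩ := hexists x hx
    exact ⟨y, ⟨hy, hxy⟩, fun z ⟨hz, hxz⟩ => huniq x z hz y hy hxz hxy⟩
  · intro p hp n h1n hnb
    set S := ⋃ j ∈ Set.Icc 1 b', K j with hS
    have hLn : L n ⊆ L b := hLmono n b h1n hnb le_rfl
    -- backward: every point of L n is close to a point of the set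
    have hback : ∀ y ∈ L n, ∃ x ∈ {x ∈ S | p x ∈ L n}, dist y x ≤ s' := by
      intro y hy
      have hyLb : y ∈ L b := hLn hy
      rw [← hcover] at hyLb
      simp only [Set.mem_iUnion, Set.mem_Icc] at hyLb
      obtain ⟨m, ⟨h1, h2⟩, hyL'⟩ := hyLb
      have hsym : hDist (L' m) (K m) ≤ s' := by
        rw [hDist_comm']; exact hdK m h1 h2
      obtain ⟨x, hxK, hyx⟩ := close_point hs1 (hLb.subset (hL'sub m h1 h2))
        (hKfin m h1 h2) hsym hyL'
      have hxS : x ∈ S := Set.mem_biUnion (Set.mem_Icc.mpr ⟨h1, h2⟩) hxK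
      obtain ⟨hpLb, hpd⟩ := hp x hxS
      have hpy : p x = y := huniq x (p x) hpLb y (hLn hy) hpd (by rwa [dist_comm])
      exact ⟨x, ⟨hxS, hpy ▸ hy⟩, hyx⟩
    -- forward
    have hfwd : ∀ x ∈ {x ∈ S | p x ∈ L n}, ∃ y ∈ L n, dist x y ≤ s' := by
      intro x ⟨hxS, hpx⟩
      exact ⟨p x, hpx, (hp x hxS).2⟩
    have hiff : {x ∈ S | p x ∈ L n}.Nonempty ↔ (L n).Nonempty := by
      constructor
      · rintro ⟨x, hxS, hpx⟩; exact ⟨p x, hpx⟩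
      · rintro ⟨y, hy⟩
        obtain ⟨x, hx, -⟩ := hback y hy
        exact ⟨x, hx⟩
    unfold hDist
    rw [if_pos hiff]
    exact Metric.hausdorffDist_le_of_mem_dist hs0.le hfwd
      (fun y hy => by obtain ⟨x, hx, hd⟩ := hback y hy; exact ⟨x, hx, hd⟩)
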